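/- Let α, β be real numbers with 0 < α/β < 1/9, and let m₁ < m₂ be as defined. If μ = m₁ or μ = m₂, then the cubic p_μ(λ) = αλ³ + λ² + βμλ + μ has a real root of multiplicity exactly two together with a distinct simple real root (in particular all its roots are real and it is not a perfect cube). -/

import Mathlib

open Polynomial

/-- For `0 < α/β < 1/9` (with `α, β > 0`), let `0 < m₁ < m₂` be the
positive roots of the quadratic `(4β³/α)μ² + C₁μ + 4/α²` with
`C₁ = 27 − 18(β/α) − (β/α)²`. If `μ = m₁` or `μ = m₂`, then the cubic
`αλ³ + λ² + βμλ + μ` has a real root of multiplicity exactly two together with a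
distinct simple real root. -/
theorem stmt_3 (α β : ℝ) (hα : 0 < α) (hβ : 0 < β) (h : α / β < 1 / 9)
    (m₁ m₂ : ℝ) (hm₁pos : 0 < m₁) (hm₁₂ : m₁ < m₂)
    (hq₁ : (4 * β ^ 3 / α) * m₁ ^ 2 + (27 - 18 * (β / α) - (β / α) ^ 2) * m₁ + 4 / α ^ 2 = 0)
    (hq₂ : (4 * β ^ 3 / α) * m₂ ^ 2 + (27 - 18 * (β / α) - (β / α) ^ 2) * m₂ + 4 / α ^ 2 = 0)
    (μ : ℝ) (hμ : μ = m₁ ∨ μ = m₂) :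
    ∃ x y : ℝ, x ≠ y ∧
      (C (α : ℂ) * X ^ 3 + X ^ 2 + C ((β : ℂ) * (μ : ℂ)) * X + C (μ : ℂ)).roots =
        {(x : ℂ), (x : ℂ), (y : ℂ)} := by
  have ha : α ≠ 0 := hα.ne'
  have hb : β ≠ 0 := hβ.ne'
  -- the cleared-denominator quadratic equation satisfied by μ
  have hq : (4 * β ^ 3 / α) * μ ^ 2 + (27 - 18 * (β / α) - (β / α) ^ 2) * μ + 4 / α ^ 2 = 0 := by
    rcases hμ with rfl | rfl <;> assumption
  have hE : 4 * α * β ^ 3 * μ ^ 2 + (27 * α ^ 2 - 18 * α * β - β ^ 2) * μ + 4 = 0 := by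
    have h2 : α ^ 2 * ((4 * β ^ 3 / α) * μ ^ 2 + (27 - 18 * (β / α) - (β / α) ^ 2) * μ + 4 / α ^ 2)
        = 0 := by rw [hq]; ring
    field_simp at h2
    have h3 : α ^ 6 * (4 * α * β ^ 3 * μ ^ 2 + (27 * α ^ 2 - 18 * α * β - β ^ 2) * μ + 4) = 0 := by
      linear_combination α ^ 6 * h2
    rcases mul_eq_zero.mp h3 with h' | h'
    · exact absurd h' (pow_ne_zero _ ha)
    · exact h'
  -- 9α < β
  have h9 : 9 * α < β := by
    rw [div_lt_div_iff₀ hβ (by norm_num : (0:ℝ) < 9)] at h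
    linarith
  have hb9 : β - 9 * α ≠ 0 := by intro h0; nlinarith
  -- the key nondegeneracy: 1 - 3αβμ ≠ 0
  have hD : 1 - 3 * α * β * μ ≠ 0 := by
    intro h0
    have hsq : (β - 9 * α) ^ 2 = 0 := by
      linear_combination 9 * α * β * hE +
        (12 * α * β ^ 3 * μ + 3 * (27 * α ^ 2 - 18 * α * β - β ^ 2) + 4 * β ^ 2) * h0
    exact hb9 (pow_eq_zero_iff (by norm_num) |>.mp hsq)
  set D : ℝ := 1 - 3 * α * β * μ with hDdef
  set x : ℝ := μ * (9 * α - β) / (2 * D) with hxdef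
  set y : ℝ := -1 / α - 2 * x with hydef
  have h2D : (2 : ℝ) * D ≠ 0 := by
    simp only [mul_ne_zero_iff]; exact ⟨by norm_num, hD⟩
  have hx : 2 * D * x = μ * (9 * α - β) := by
    rw [hxdef]; field_simp
  -- the two key identities for the double root x
  have hx2 : 3 * α * x ^ 2 + 2 * x + β * μ = 0 := by
    have key : (2 * D) ^ 2 * (3 * α * x ^ 2 + 2 * x + β * μ) = 0 := by
      linear_combination (9 * α * μ) * hE +
        (3 * α * (2 * D * x + μ * (9 * α - β)) + 4 * D) * hx
    rcases mul_eq_zero.mp key with h' | h'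
    · exact absurd h' (pow_ne_zero _ h2D)
    · exact h'
  have hx3 : 2 * α * x ^ 3 + x ^ 2 - μ = 0 := by
    have key : (2 * D) ^ 3 * (2 * α * x ^ 3 + x ^ 2 - μ) = 0 := by
      linear_combination (2 * (27 * α ^ 2 * μ ^ 2 - μ)) * hE +
        (2 * α * ((2 * D * x) ^ 2 + (2 * D * x) * (μ * (9 * α - β)) + (μ * (9 * α - β)) ^ 2)
          + 2 * D * (2 * D * x + μ * (9 * α - β))) * hx
    rcases mul_eq_zero.mp key with h' | h'
    · exact absurd h' (pow_ne_zero _ h2D)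
    · exact h'
  have hy' : α * y = -1 - 2 * α * x := by
    rw [hydef]; field_simp
  -- x ≠ y
  have hxy : x ≠ y := by
    intro heq
    have h31 : 3 * α * x + 1 = 0 := by
      have : α * y = α * x := by rw [heq]
      rw [hy'] at this
      linarith
    apply hD
    linear_combination (-3 * α) * hx2 + (3 * α * x + 1) * h31
  -- the three real coefficient identities
  have r1 : α * (2 * x + y) + 1 = 0 := by linear_combination hy'
  have r2 : β * μ - α * (x ^ 2 + 2 * x * y) = 0 := by
    linear_combination (-2 * x) * hy' + hx2
  have r3 : α * x ^ 2 * y + μ = 0 := by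
    linear_combination x ^ 2 * hy' - hx3
  -- complex versions
  have c1 : (α : ℂ) * (2 * (x : ℂ) + (y : ℂ)) + 1 = 0 := by exact_mod_cast congrArg (Complex.ofReal) r1
  have c2 : (β : ℂ) * (μ : ℂ) - (α : ℂ) * ((x : ℂ) ^ 2 + 2 * (x : ℂ) * (y : ℂ)) = 0 := by
    exact_mod_cast congrArg (Complex.ofReal) r2
  have c3 : (α : ℂ) * (x : ℂ) ^ 2 * (y : ℂ) + (μ : ℂ) = 0 := by
    exact_mod_cast congrArg (Complex.ofReal) r3
  -- lift to polynomial ring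
  have hp1 : C (α : ℂ) * (2 * C (x : ℂ) + C (y : ℂ)) + 1 = 0 := by
    have := congrArg (C : ℂ →+* ℂ[X]) c1
    simpa [map_ofNat C 2] using this
  have hp2 : C (β : ℂ) * C (μ : ℂ) - C (α : ℂ) * (C (x : ℂ) ^ 2 + 2 * C (x : ℂ) * C (y : ℂ)) = 0 := by
    have := congrArg (C : ℂ →+* ℂ[X]) c2
    simpa [map_ofNat C 2] using this
  have hp3 : C (α : ℂ) * C (x : ℂ) ^ 2 * C (y : ℂ) + C (μ : ℂ) = 0 := by
    have := congrArg (C : ℂ →+* ℂ[X]) c3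
    simpa using this
  refine ⟨x, y, hxy, ?_⟩
  have hpoly : C (α : ℂ) * X ^ 3 + X ^ 2 + C ((β : ℂ) * (μ : ℂ)) * X + C ((μ : ℂ))
      = C (α : ℂ) * ((X - C (x : ℂ)) ^ 2 * (X - C (y : ℂ))) := by
    simp only [C_mul]
    linear_combination X ^ 2 * hp1 + X * hp2 + hp3
  rw [hpoly]
  have hαC : (α : ℂ) ≠ 0 := by exact_mod_cast ha
  rw [roots_C_mul _ hαC]
  have hne : ((X - C (x : ℂ)) ^ 2 * (X - C (y : ℂ))) ≠ 0 :=
    (((monic_X_sub_C _).pow 2).mul (monic_X_sub_C _)).ne_zero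
  rw [roots_mul hne, roots_pow, roots_X_sub_C, roots_X_sub_C]
  rfl
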